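/- Reversing the order of a shortest 1-path from a to a' (where a > a' > 0) and replacing each entry by its reciprocal yields the shortest 1-path from 1/a' to 1/a. -/

import Mathlib

/-- An `N`-path is a strictly decreasing sequence of rationals (automatically
in lowest terms, as elements of `ℚ`) such that consecutive entries `x > y`
satisfy `x − y = N / (lcm(N, x.den) · lcm(N, y.den))`. -/
def IsNPath (N : ℕ) (l : List ℚ) : Prop :=
  l.Chain' fun x y => y < x ∧
    x - y = (N : ℚ) / ((Nat.lcm N x.den : ℚ) * (Nat.lcm N y.den : ℚ))

/-- An `N`-path from `a` to `a'`: an `N`-path whose first entry is `a` and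
whose last entry is `a'`. -/
def IsNPathFrom (N : ℕ) (a a' : ℚ) (l : List ℚ) : Prop :=
  IsNPath N l ∧ l.head? = some a ∧ l.getLast? = some a'

/-- A shortest `N`-path from `a` to `a'`: an `N`-path from `a` to `a'` such
that no proper subsequence (containing the endpoints) is an `N`-path from `a`
to `a'`. -/
def IsShortestNPath (N : ℕ) (a a' : ℚ) (l : List ℚ) : Prop :=
  IsNPathFrom N a a' l ∧
    ∀ l' : List ℚ, l'.Sublist l → l' ≠ l → ¬ IsNPathFrom N a a' l'

lemma den_inv_of_pos {x : ℚ} (hx : 0 < x) : ((x⁻¹).den : ℚ) = (x.num : ℚ) := by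
  have hnum : 0 < x.num := Rat.num_pos.mpr hx
  have hco : Nat.Coprime ((x.den : ℤ)).natAbs x.num.natAbs := by
    simpa [Nat.Coprime] using (x.reduced).symm
  have hinv : x⁻¹ = ((x.den : ℤ) : ℚ) / ((x.num : ℤ) : ℚ) := by
    rw [Rat.inv_def, Rat.divInt_eq_div]
  have := Rat.den_div_eq_of_coprime hnum hco
  rw [← hinv] at this
  exact_mod_cast congrArg (fun z : ℤ => (z : ℚ)) this

lemma pair_step {x y : ℚ} (hy : 0 < y) (hxy : y < x)
    (hstep : x - y = 1 / ((x.den : ℚ) * (y.den : ℚ))) :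
    y⁻¹ - x⁻¹ = 1 / (((y⁻¹).den : ℚ) * ((x⁻¹).den : ℚ)) := by
  have hx : 0 < x := hy.trans hxy
  rw [den_inv_of_pos hy, den_inv_of_pos hx]
  have hxn : (0:ℚ) < (x.num : ℚ) := by exact_mod_cast Rat.num_pos.mpr hx
  have hyn : (0:ℚ) < (y.num : ℚ) := by exact_mod_cast Rat.num_pos.mpr hy
  have hxd : (0:ℚ) < (x.den : ℚ) := by exact_mod_cast x.pos
  have hyd : (0:ℚ) < (y.den : ℚ) := by exact_mod_cast y.pos
  have ex : (x.num : ℚ) = x * x.den := (div_eq_iff hxd.ne').mp (Rat.num_div_den x)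
  have ey : (y.num : ℚ) = y * y.den := (div_eq_iff hyd.ne').mp (Rat.num_div_den y)
  have h1 : y⁻¹ - x⁻¹ = (x - y) / (x * y) := by
    rw [inv_eq_one_div, inv_eq_one_div, div_sub_div _ _ hy.ne' hx.ne', one_mul, mul_one,
      mul_comm y x]
  rw [h1, hstep, ex, ey]
  rw [div_div]
  congr 1
  ring

lemma npath1_iff (l : List ℚ) :
    IsNPath 1 l ↔
      l.Chain' fun x y => y < x ∧ x - y = 1 / ((x.den : ℚ) * (y.den : ℚ)) := by
  unfold IsNPath
  simp [Nat.lcm_one_left]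

lemma ge_last_of_chain (l : List ℚ) :
    l.Chain' (fun x y : ℚ => y < x) → ∀ b, l.getLast? = some b → ∀ x ∈ l, b ≤ x := by
  induction l with
  | nil => simp
  | cons x t ih =>
    intro hc b hlast z hz
    cases t with
    | nil =>
      simp only [List.getLast?_singleton, Option.some.injEq] at hlast
      simp only [List.mem_singleton] at hz
      subst hlast; subst hz; exact le_refl _
    | cons y t' =>
      simp only [List.Chain'] at hc
      rw [List.isChain_cons_cons] at hc
      rw [List.getLast?_cons_cons] at hlast
      rcases List.mem_cons.mp hz with rfl | hz'
      · exact (ih hc.2 b hlast y (by simp)).trans hc.1.le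
      · exact ih hc.2 b hlast z hz'

lemma chain_inv (l : List ℚ) :
    (∀ x ∈ l, 0 < x) →
    l.Chain' (fun x y => y < x ∧ x - y = 1 / ((x.den : ℚ) * (y.den : ℚ))) →
    l.Chain' (fun x y =>
      x⁻¹ < y⁻¹ ∧ y⁻¹ - x⁻¹ = 1 / (((y⁻¹).den : ℚ) * ((x⁻¹).den : ℚ))) := by
  induction l with
  | nil => intro _ _; exact List.isChain_nil
  | cons x t ih =>
    intro hpos hc
    cases t with
    | nil => exact List.isChain_singleton _
    | cons y t' =>
      simp only [List.Chain'] at hc ⊢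
      rw [List.isChain_cons_cons] at hc ⊢
      have hy : 0 < y := hpos y (by simp)
      refine ⟨⟨?_, pair_step hy hc.1.1 hc.1.2⟩,
        ih (fun z hz => hpos z (List.mem_cons_of_mem _ hz)) hc.2⟩
      exact (inv_lt_inv₀ (hy.trans hc.1.1) hy).mpr hc.1.1

lemma npath_inv (l : List ℚ) (hpos : ∀ x ∈ l, 0 < x) (h : IsNPath 1 l) :
    IsNPath 1 ((l.map (·⁻¹)).reverse) := by
  rw [npath1_iff] at h ⊢
  simp only [List.Chain'] at h ⊢
  rw [List.isChain_reverse, List.isChain_map]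
  exact chain_inv l hpos h

lemma double_inv (l : List ℚ) : ((l.map (·⁻¹)).reverse.map (·⁻¹)).reverse = l := by
  rw [← List.map_reverse, List.reverse_reverse, List.map_map]
  simp [Function.comp_def]

lemma npathfrom_inv {a a' : ℚ} {l : List ℚ} (hpos : ∀ x ∈ l, 0 < x)
    (h : IsNPathFrom 1 a a' l) : IsNPathFrom 1 a'⁻¹ a⁻¹ ((l.map (·⁻¹)).reverse) := by
  obtain ⟨hp, hh, hl⟩ := h
  refine ⟨npath_inv l hpos hp, ?_, ?_⟩
  · rw [List.head?_reverse, List.getLast?_map, hl, Option.map_some]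
  · rw [List.getLast?_reverse, List.head?_map, hh, Option.map_some]

/-- Reversing the order of a shortest `1`-path from `a` to
`a'` (where `a > a' > 0`) and replacing each entry by its reciprocal yields
the shortest `1`-path from `1/a'` to `1/a`. -/
theorem stmt13 (a a' : ℚ) (h : a' < a) (h0 : 0 < a')
    (l : List ℚ) (hl : IsShortestNPath 1 a a' l) :
    IsShortestNPath 1 a'⁻¹ a⁻¹ ((l.map (·⁻¹)).reverse) := by
  obtain ⟨⟨hp, hh, hlast⟩, hmin⟩ := hl
  have hdec : l.Chain' (fun x y : ℚ => y < x) := by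
    exact List.IsChain.imp (fun a b hab => hab.1) hp
  have hpos : ∀ x ∈ l, 0 < x := fun x hx =>
    lt_of_lt_of_le h0 (ge_last_of_chain l hdec a' hlast x hx)
  have hposL : ∀ x ∈ (l.map (·⁻¹)).reverse, 0 < x := by
    intro x hx
    rw [List.mem_reverse, List.mem_map] at hx
    obtain ⟨z, hz, rfl⟩ := hx
    exact inv_pos.mpr (hpos z hz)
  refine ⟨npathfrom_inv hpos ⟨hp, hh, hlast⟩, ?_⟩
  intro l' hsub hne hfrom
  have hLl : (((l.map (·⁻¹)).reverse.map (·⁻¹)).reverse) = l := double_inv l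
  have hsub'' : ((l'.map (·⁻¹)).reverse).Sublist l := by
    rw [← hLl]; exact (hsub.map _).reverse
  have hne'' : ((l'.map (·⁻¹)).reverse) ≠ l := by
    intro he
    apply hne
    have := congrArg (fun t : List ℚ => (t.map (·⁻¹)).reverse) he
    simpa [double_inv] using this
  have hpos' : ∀ x ∈ l', 0 < x := fun x hx => hposL x (hsub.subset hx)
  have hfrom'' : IsNPathFrom 1 a a' ((l'.map (·⁻¹)).reverse) := by
    have := npathfrom_inv hpos' hfrom
    simpa [inv_inv] using this
  exact hmin _ hsub'' hne'' hfrom''
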